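/- arXiv:0803.3118 — 7 statements merged into one kernel-verified Lean document; each statement's English description precedes it below -/
import Mathlib

section
/- Let R be a commutative ring and let (Ψ_d)_{d≥1} be a family of maps Ψ_d : R → R such that each Ψ_d is additive, Ψ_1 is the identity, and Ψ_i ∘ Ψ_j = Ψ_{ij} for all i, j ≥ 1. Suppose B, C : ℕ → R satisfy, for every n ≥ 1, ∑_{(k,m)} Ψ_m(k·B_k) = C_n, where the sum is over all ordered pairs (k,m) of positive integers with k·m = n. Then for every n ≥ 1, n·B_n = ∑_{d ∣ n} μ(d)·Ψ_d(C_{n/d}), where μ is the Möbius function and the sum is over the positive divisors d of n. -/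
open scoped ArithmeticFunction
open scoped ArithmeticFunction.Moebius

lemma sum_moebius_antidiag (m : ℕ) (_hm : m ≠ 0) :
    ∑ q ∈ Nat.divisorsAntidiagonal m, ((μ q.1 : ℤ)) = if m = 1 then 1 else 0 := by
  have h := congrArg (fun f : ArithmeticFunction ℤ => f m)
    ArithmeticFunction.moebius_mul_coe_zeta
  simp only [ArithmeticFunction.mul_apply, ArithmeticFunction.one_apply] at h
  rw [← h]
  refine Finset.sum_congr rfl fun q hq => ?_
  have h2 := Nat.right_ne_zero_of_mem_divisorsAntidiagonal hq
  simp [ArithmeticFunction.zeta_apply, h2]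

/-- **Inversion formula for power structures (special case).**
If the Adams operations `Ψ_d` are additive, `Ψ_1 = id` and `Ψ_i ∘ Ψ_j = Ψ_{ij}`,
and the coefficients `B`, `C` satisfy `∑_{km = n} Ψ_m (k • B_k) = C_n` for all `n ≥ 1`,
then `n • B_n = ∑_{d ∣ n} μ(d) • Ψ_d (C_{n/d})`. -/
theorem adams_moebius_inversion (R : Type*) [CommRing R] (Ψ : ℕ → R → R)
    (hadd : ∀ d, 1 ≤ d → ∀ x y : R, Ψ d (x + y) = Ψ d x + Ψ d y)
    (hone : ∀ x : R, Ψ 1 x = x)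
    (hcomp : ∀ i, 1 ≤ i → ∀ j, 1 ≤ j → ∀ x : R, Ψ i (Ψ j x) = Ψ (i * j) x)
    (B C : ℕ → R)
    (hBC : ∀ n : ℕ, 1 ≤ n →
      ∑ p ∈ Nat.divisorsAntidiagonal n, Ψ p.2 ((p.1 : ℤ) • B p.1) = C n) :
    ∀ n : ℕ, 1 ≤ n →
      (n : ℤ) • B n = ∑ d ∈ Nat.divisors n, (μ d : ℤ) • Ψ d (C (n / d)) := by
  intro n hn
  have hn0 : n ≠ 0 := by omega
  symm
  calc ∑ d ∈ Nat.divisors n, (μ d : ℤ) • Ψ d (C (n / d))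
      = ∑ p ∈ Nat.divisorsAntidiagonal n, (μ p.1 : ℤ) • Ψ p.1 (C p.2) :=
        (Nat.sum_divisorsAntidiagonal (fun d m => (μ d : ℤ) • Ψ d (C m))).symm
    _ = ∑ p ∈ Nat.divisorsAntidiagonal n, ∑ q ∈ Nat.divisorsAntidiagonal p.2,
          (μ p.1 : ℤ) • Ψ (p.1 * q.2) ((q.1 : ℤ) • B q.1) := by
        refine Finset.sum_congr rfl fun p hp => ?_
        have h1 : 1 ≤ p.1 :=
          Nat.one_le_iff_ne_zero.2 (Nat.left_ne_zero_of_mem_divisorsAntidiagonal hp)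
        have h2 : 1 ≤ p.2 :=
          Nat.one_le_iff_ne_zero.2 (Nat.right_ne_zero_of_mem_divisorsAntidiagonal hp)
        have hms := map_sum (AddMonoidHom.mk' (Ψ p.1) (hadd p.1 h1))
          (fun q : ℕ × ℕ => Ψ q.2 ((q.1 : ℤ) • B q.1)) p.2.divisorsAntidiagonal
        simp only [AddMonoidHom.mk'_apply] at hms
        rw [← hBC p.2 h2, hms, Finset.smul_sum]
        refine Finset.sum_congr rfl fun q hq => ?_
        have hq2 : 1 ≤ q.2 :=
          Nat.one_le_iff_ne_zero.2 (Nat.right_ne_zero_of_mem_divisorsAntidiagonal hq)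
        simp only [AddMonoidHom.mk'_apply, hcomp p.1 h1 q.2 hq2]
    _ = ∑ p ∈ Nat.divisorsAntidiagonal n, ∑ q ∈ Nat.divisorsAntidiagonal p.2,
          (μ q.1 : ℤ) • Ψ (q.1 * q.2) ((p.1 : ℤ) • B p.1) := by
        rw [Finset.sum_sigma', Finset.sum_sigma']
        apply Finset.sum_nbij' (fun ⟨⟨d, _e⟩, ⟨k, m⟩⟩ => ⟨(k, d * m), (d, m)⟩)
          (fun ⟨⟨k, _e⟩, ⟨d, m⟩⟩ => ⟨(d, k * m), (k, m)⟩) <;>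
          aesop (add simp [Nat.mem_divisorsAntidiagonal, mul_assoc, mul_comm, mul_left_comm])
    _ = ∑ p ∈ Nat.divisorsAntidiagonal n,
          (if p.2 = 1 then (1 : ℤ) else 0) • Ψ p.2 ((p.1 : ℤ) • B p.1) := by
        refine Finset.sum_congr rfl fun p hp => ?_
        have h2 := Nat.right_ne_zero_of_mem_divisorsAntidiagonal hp
        rw [← sum_moebius_antidiag p.2 h2, Finset.sum_smul]
        refine Finset.sum_congr rfl fun q hq => ?_
        rw [(Nat.mem_divisorsAntidiagonal.mp hq).1]
    _ = (n : ℤ) • B n := by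
        rw [Finset.sum_eq_single (n, 1)]
        · simp [hone]
        · rintro ⟨k, m⟩ hb hne
          rcases Nat.mem_divisorsAntidiagonal.mp hb with ⟨hkm, -⟩
          have hm : m ≠ 1 := by
            rintro rfl; exact hne (by simp_all)
          simp [hm]
        · intro h
          exact absurd (Nat.mem_divisorsAntidiagonal.mpr ⟨by simp, hn0⟩) h
end

section
/- Let R be a commutative ring and let (Ψ_d)_{d≥1} be a family of maps Ψ_d : R → R such that each Ψ_d is additive and Ψ_1 is the identity (no composition law is assumed). Suppose B, C : ℕ → R satisfy, for every n ≥ 1, ∑_{(k,m)} Ψ_m(k·B_k) = C_n, where the sum is over all ordered pairs (k,m) of positive integers with k·m = n. Then for every n ≥ 1, n·B_n = ∑ (−1)^{s−1} (Ψ_{i_1} ∘ Ψ_{i_2} ∘ ⋯ ∘ Ψ_{i_{s−1}})(C_{i_s}), where the (finite) sum ranges over all finite sequences (i_1, …, i_s) of positive integers, s ≥ 1, with i_1 ⋯ i_s = n and with i_1, …, i_{s−1} all strictly greater than 1 (for s = 1 the summand is C_n). -/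
/-- The finset of all lists of natural numbers of length at most `n`
with all entries at most `n`. -/
def boundedLists (n : ℕ) : Finset (List ℕ) :=
  (Finset.range (n + 1)).biUnion fun s =>
    (Fintype.piFinset fun _ : Fin s => Finset.range (n + 1)).image List.ofFn

/-- The finset of all finite sequences `(i_1, …, i_s)` of positive integers, `s ≥ 1`,
with `i_1 ⋯ i_s = n` and `i_1, …, i_{s-1}` all strictly greater than `1`.
(Such a sequence necessarily has length at most `n` and all entries at most `n`,
so it belongs to `boundedLists n`.) -/
def factorizationSeqs (n : ℕ) : Finset (List ℕ) :=
  (boundedLists n).filter fun l =>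
    l ≠ [] ∧ (∀ i ∈ l, 1 ≤ i) ∧ l.prod = n ∧ ∀ i ∈ l.dropLast, 1 < i

private lemma length_le_prod : ∀ l : List ℕ, l ≠ [] → (∀ i ∈ l, 1 ≤ i) →
    (∀ i ∈ l.dropLast, 1 < i) → l.length ≤ l.prod := by
  intro l
  induction l with
  | nil => simp
  | cons a l ih =>
    intro _ h1 h2
    rcases eq_or_ne l [] with rfl | hl
    · simpa using h1 a (by simp)
    · have ha : 1 < a := by
        apply h2 a
        rw [List.dropLast_cons_of_ne_nil hl]; simp
      have hll : l.length ≤ l.prod := by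
        apply ih hl (fun i hi => h1 i (by simp [hi]))
        intro i hi
        apply h2 i
        rw [List.dropLast_cons_of_ne_nil hl]; simp [hi]
      have hlp : 1 ≤ l.length := by
        rcases l with _ | _ <;> simp_all
      simp only [List.length_cons, List.prod_cons]
      calc l.length + 1 ≤ l.prod + l.prod := by omega
        _ = 2 * l.prod := by ring
        _ ≤ a * l.prod := Nat.mul_le_mul_right _ ha

private lemma mem_factorizationSeqs {n : ℕ} (hn : 1 ≤ n) {l : List ℕ} :
    l ∈ factorizationSeqs n ↔
      l ≠ [] ∧ (∀ i ∈ l, 1 ≤ i) ∧ l.prod = n ∧ ∀ i ∈ l.dropLast, 1 < i := by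
  constructor
  · intro h
    exact (Finset.mem_filter.mp h).2
  · rintro ⟨hne, h1, hp, h2⟩
    refine Finset.mem_filter.mpr ⟨?_, hne, h1, hp, h2⟩
    unfold boundedLists
    rw [Finset.mem_biUnion]
    refine ⟨l.length, ?_, ?_⟩
    · rw [Finset.mem_range]
      have := length_le_prod l hne h1 h2
      omega
    · rw [Finset.mem_image]
      refine ⟨l.get, ?_, List.ofFn_get l⟩
      rw [Fintype.mem_piFinset]
      intro i
      rw [Finset.mem_range]
      have hd : l.get i ∣ l.prod := List.dvd_prod (l.get_mem i)
      have := Nat.le_of_dvd (hp ▸ hn) hd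
      omega

private lemma factorizationSeqs_decomp (n : ℕ) (hn : 1 ≤ n) :
    factorizationSeqs n =
      insert [n] ((n.divisors.filter (1 < ·)).biUnion fun m =>
        (factorizationSeqs (n / m)).image (m :: ·)) := by
  ext l
  rw [mem_factorizationSeqs hn, Finset.mem_insert, Finset.mem_biUnion]
  constructor
  · rintro ⟨hne, h1, hp, h2⟩
    rcases l with _ | ⟨a, l⟩
    · exact absurd rfl hne
    rcases eq_or_ne l [] with rfl | hl
    · left; simp at hp; simp [hp]
    · right
      have ha : 1 < a := by
        apply h2 a; rw [List.dropLast_cons_of_ne_nil hl]; simp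
      have hadvd : a ∣ n := hp ▸ Dvd.intro _ rfl
      have hquot : l.prod = n / a := by
        rw [← hp, List.prod_cons, Nat.mul_div_cancel_left _ (by omega)]
      refine ⟨a, ?_, ?_⟩
      · rw [Finset.mem_filter, Nat.mem_divisors]
        exact ⟨⟨hadvd, by omega⟩, ha⟩
      · rw [Finset.mem_image]
        refine ⟨l, ?_, rfl⟩
        have hq1 : 1 ≤ n / a :=
          (Nat.one_le_div_iff (by omega)).mpr (Nat.le_of_dvd (by omega) hadvd)
        rw [mem_factorizationSeqs hq1]
        refine ⟨hl, fun i hi => h1 i (by simp [hi]), hquot, ?_⟩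
        intro i hi
        apply h2 i
        rw [List.dropLast_cons_of_ne_nil hl]
        simp [hi]
  · rintro (rfl | ⟨m, hm, hl⟩)
    · exact ⟨by simp, by simp; omega, by simp, by simp⟩
    · rw [Finset.mem_filter, Nat.mem_divisors] at hm
      obtain ⟨⟨hmd, hn0⟩, hm1⟩ := hm
      rw [Finset.mem_image] at hl
      obtain ⟨l', hl', rfl⟩ := hl
      have hq1 : 1 ≤ n / m := Nat.one_le_div_iff (by omega) |>.mpr (Nat.le_of_dvd (by omega) hmd)
      rw [mem_factorizationSeqs hq1] at hl'
      obtain ⟨hne, h1, hp, h2⟩ := hl'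
      refine ⟨by simp, ?_, ?_, ?_⟩
      · intro i hi
        rcases List.mem_cons.mp hi with rfl | hi
        · omega
        · exact h1 i hi
      · rw [List.prod_cons, hp, Nat.mul_div_cancel' hmd]
      · intro i hi
        rw [List.dropLast_cons_of_ne_nil hne] at hi
        rcases List.mem_cons.mp hi with rfl | hi
        · exact hm1
        · exact h2 i hi

private lemma sum_factorizationSeqs {M : Type*} [AddCommMonoid M] (n : ℕ) (hn : 1 ≤ n)
    (F : List ℕ → M) :
    ∑ l ∈ factorizationSeqs n, F l =
      F [n] + ∑ m ∈ n.divisors.filter (1 < ·),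
        ∑ l ∈ factorizationSeqs (n / m), F (m :: l) := by
  rw [factorizationSeqs_decomp n hn, Finset.sum_insert, Finset.sum_biUnion]
  · congr 1
    refine Finset.sum_congr rfl fun m _ => ?_
    exact Finset.sum_image fun a _ b _ h => by simpa using h
  · intro m₁ h₁ m₂ h₂ hne
    simp only [Finset.disjoint_left, Finset.mem_image]
    rintro l ⟨a, _, rfl⟩
    rintro ⟨b, _, hb⟩
    injection hb with h _
    exact hne h.symm
  · rw [Finset.mem_biUnion]
    rintro ⟨m, hm, hl⟩
    rw [Finset.mem_image] at hl
    obtain ⟨l', hl', heq⟩ := hl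
    have hq1 : 1 ≤ n / m := by
      rw [Finset.mem_filter, Nat.mem_divisors] at hm
      exact Nat.one_le_div_iff (by omega) |>.mpr (Nat.le_of_dvd (by omega) hm.1.1)
    have := (mem_factorizationSeqs hq1).mp hl' |>.1
    rcases l' with _ | _
    · exact this rfl
    · simp at heq

/-- **Inversion formula for power structures (general case, no composition law).**
If the operations `Ψ_d` are additive with `Ψ_1 = id`, and `B`, `C` satisfy
`∑_{km = n} Ψ_m (k • B_k) = C_n` for all `n ≥ 1`, then
`n • B_n = ∑ (-1)^{s-1} (Ψ_{i_1} ∘ ⋯ ∘ Ψ_{i_{s-1}}) (C_{i_s})`, the sum being over all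
finite sequences `(i_1, …, i_s)` of positive integers with `i_1 ⋯ i_s = n` and
`i_1, …, i_{s-1} > 1`. -/
theorem adams_inversion_general (R : Type*) [CommRing R] (Ψ : ℕ → R → R)
    (hadd : ∀ d, 1 ≤ d → ∀ x y : R, Ψ d (x + y) = Ψ d x + Ψ d y)
    (hone : ∀ x : R, Ψ 1 x = x)
    (B C : ℕ → R)
    (hBC : ∀ n : ℕ, 1 ≤ n →
      ∑ p ∈ Nat.divisorsAntidiagonal n, Ψ p.2 ((p.1 : ℤ) • B p.1) = C n) :
    ∀ n : ℕ, 1 ≤ n →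
      (n : ℤ) • B n =
        ∑ l ∈ factorizationSeqs n,
          ((-1 : ℤ) ^ (l.length - 1)) •
            (l.dropLast.foldr (fun i r => Ψ i r) (C (l.getLastD 1))) := by
  -- Ψ d as an additive monoid hom, for d ≥ 1
  have hΨ : ∀ d, 1 ≤ d → ∀ (z : ℤ) (x : R), Ψ d (z • x) = z • Ψ d x := by
    intro d hd z x
    exact map_zsmul (AddMonoidHom.mk' (Ψ d) (hadd d hd)) z x
  have hΨsum : ∀ d, 1 ≤ d → ∀ (s : Finset (List ℕ)) (f : List ℕ → R),
      Ψ d (∑ l ∈ s, f l) = ∑ l ∈ s, Ψ d (f l) := by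
    intro d hd s f
    exact map_sum (AddMonoidHom.mk' (Ψ d) (hadd d hd)) f s
  intro n
  induction n using Nat.strong_induction_on with
  | _ n ih =>
  intro hn
  -- rewrite hBC as a sum over divisors
  have key : ∑ m ∈ n.divisors, Ψ m (((n / m : ℕ) : ℤ) • B (n / m)) = C n := by
    rw [← hBC n hn, Nat.sum_divisorsAntidiagonal' (f := fun a b => Ψ b ((a : ℤ) • B a))]
  have herase : n.divisors.erase 1 = n.divisors.filter (1 < ·) := by
    ext m
    simp only [Finset.mem_erase, Finset.mem_filter]
    constructor
    · rintro ⟨hm1, hm⟩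
      exact ⟨hm, lt_of_le_of_ne (Nat.pos_of_mem_divisors hm) (Ne.symm hm1)⟩
    · rintro ⟨hm, hm1⟩
      exact ⟨by omega, hm⟩
  have h1mem : (1 : ℕ) ∈ n.divisors := Nat.one_mem_divisors.mpr (by omega)
  rw [← Finset.add_sum_erase _ _ h1mem, herase, Nat.div_one, hone] at key
  -- key : n • B n + ∑ m ∈ filter, Ψ m ((n/m) • B (n/m)) = C n
  rw [sum_factorizationSeqs n hn]
  have hsingle : ((-1 : ℤ) ^ ([n].length - 1)) •
      (([n] : List ℕ).dropLast.foldr (fun i r => Ψ i r) (C ([n].getLastD 1))) = C n := by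
    simp
  rw [hsingle]
  have hterm : ∀ m ∈ n.divisors.filter (1 < ·),
      ∑ l ∈ factorizationSeqs (n / m),
        ((-1 : ℤ) ^ ((m :: l).length - 1)) •
          ((m :: l).dropLast.foldr (fun i r => Ψ i r) (C ((m :: l).getLastD 1)))
      = - Ψ m (((n / m : ℕ) : ℤ) • B (n / m)) := by
    intro m hm
    rw [Finset.mem_filter, Nat.mem_divisors] at hm
    obtain ⟨⟨hmd, hn0⟩, hm1⟩ := hm
    have hq1 : 1 ≤ n / m := Nat.one_le_div_iff (by omega) |>.mpr (Nat.le_of_dvd (by omega) hmd)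
    have hqlt : n / m < n := Nat.div_lt_self (by omega) hm1
    rw [ih (n / m) hqlt hq1, hΨsum m (by omega), ← Finset.sum_neg_distrib]
    refine Finset.sum_congr rfl fun l hl => ?_
    obtain ⟨hne, h1, hp, h2⟩ := (mem_factorizationSeqs hq1).mp hl
    have hlen : 1 ≤ l.length := by rcases l with _ | _ <;> simp_all
    have hdl : (m :: l).dropLast = m :: l.dropLast := List.dropLast_cons_of_ne_nil hne
    have hgl : (m :: l).getLastD 1 = l.getLastD 1 := by
      rcases l with _ | ⟨a, l⟩
      · exact absurd rfl hne
      · simp [List.getLastD_cons]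
    rw [hdl, hgl]
    simp only [List.foldr_cons, List.length_cons]
    rw [hΨ m (by omega)]
    have hpow : (-1 : ℤ) ^ (l.length + 1 - 1) = -(-1 : ℤ) ^ (l.length - 1) := by
      have h : l.length + 1 - 1 = (l.length - 1) + 1 := by omega
      rw [h, pow_succ]
      ring
    rw [hpow, neg_smul]
  rw [Finset.sum_congr rfl hterm, Finset.sum_neg_distrib]
  linear_combination key
end

section
/- Let R be a commutative ring and let u, v : ℕ → R be arbitrary functions. Then for every integer a ≥ 1, ∑_{(k,n): kn=a} ∑_{m ∣ n} ∑_{l ∣ k} μ(n/m)·μ(k/l)·u(k·m)·v(l) = ∑_{b ∣ a} μ(a/b)·u(b)·v(b), where the outer sum on the left is over ordered pairs (k,n) of positive integers with k·n = a, and the divisor sums are over positive divisors. -/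
open scoped ArithmeticFunction ArithmeticFunction.Moebius

/-- **The key double Möbius sum identity.**
For arbitrary functions `u v : ℕ → R` and every `a ≥ 1`,
`∑_{kn = a} ∑_{m ∣ n} ∑_{l ∣ k} μ(n/m) μ(k/l) u(km) v(l) = ∑_{b ∣ a} μ(a/b) u(b) v(b)`. -/
theorem double_moebius_sum_collapse (R : Type*) [CommRing R] (u v : ℕ → R) :
    ∀ a : ℕ, 1 ≤ a →
      ∑ p ∈ Nat.divisorsAntidiagonal a, ∑ m ∈ Nat.divisors p.2, ∑ l ∈ Nat.divisors p.1,
        ((μ (p.2 / m) * μ (p.1 / l) : ℤ) • (u (p.1 * m) * v l))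
      = ∑ b ∈ Nat.divisors a, (μ (a / b) : ℤ) • (u b * v b) := by
  intro a ha
  have ha0 : a ≠ 0 := by omega
  set V : ℕ → R := fun k => ∑ l ∈ Nat.divisors k, (μ (k / l) : ℤ) • v l with hV
  have key : ∀ b > 0, ∑ k ∈ Nat.divisors b, V k = v b := by
    refine (ArithmeticFunction.sum_eq_iff_sum_smul_moebius_eq (f := V) (g := v)).mpr ?_
    intro n hn
    rw [Nat.sum_divisorsAntidiagonal' (f := fun x y => (μ x : ℤ) • v y)]
  calc
    ∑ p ∈ Nat.divisorsAntidiagonal a, ∑ m ∈ Nat.divisors p.2, ∑ l ∈ Nat.divisors p.1,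
        ((μ (p.2 / m) * μ (p.1 / l) : ℤ) • (u (p.1 * m) * v l))
      = ∑ k ∈ Nat.divisors a, ∑ m ∈ Nat.divisors (a / k),
          (μ ((a / k) / m) : ℤ) • (u (k * m) * V k) := by
        rw [Nat.sum_divisorsAntidiagonal (f := fun k n => ∑ m ∈ Nat.divisors n,
          ∑ l ∈ Nat.divisors k, ((μ (n / m) * μ (k / l) : ℤ) • (u (k * m) * v l)))]
        refine Finset.sum_congr rfl fun k hk => Finset.sum_congr rfl fun m hm => ?_
        rw [hV, Finset.mul_sum, Finset.smul_sum]
        exact Finset.sum_congr rfl fun l hl => by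
          rw [mul_smul_comm, smul_smul]
    _ = ∑ k ∈ Nat.divisors a, ∑ b ∈ {d ∈ Nat.divisors a | k ∣ d},
          (μ (a / b) : ℤ) • (u b * V k) := by
        refine Finset.sum_congr rfl fun k hk => ?_
        obtain ⟨⟨c, hc⟩, -⟩ := Nat.mem_divisors.mp hk
        have hk0 : k ≠ 0 := by rintro rfl; simp at hc; omega
        refine Finset.sum_nbij' (fun m => k * m) (fun b => b / k) ?_ ?_ ?_ ?_ ?_
        · intro m hm
          obtain ⟨⟨e, he⟩, -⟩ := Nat.mem_divisors.mp hm
          simp only [Finset.mem_filter, Nat.mem_divisors]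
          exact ⟨⟨⟨e, by rw [hc, Nat.mul_div_cancel_left c (Nat.pos_of_ne_zero hk0)] at he
                         rw [hc, he]; ring⟩, ha0⟩, Dvd.intro m rfl⟩
        · intro b hb
          simp only [Finset.mem_filter, Nat.mem_divisors] at hb
          obtain ⟨⟨hba, -⟩, hkb⟩ := hb
          refine Nat.mem_divisors.mpr ⟨?_, ?_⟩
          · obtain ⟨e, he⟩ := hkb
            obtain ⟨f, hf⟩ := hba
            refine ⟨f, ?_⟩
            have : a = k * (e * f) := by rw [hf, he]; ring
            show a / k = b / k * f
            rw [he, Nat.mul_div_cancel_left e (Nat.pos_of_ne_zero hk0), this,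
              Nat.mul_div_cancel_left _ (Nat.pos_of_ne_zero hk0)]
          · rw [hc, Nat.mul_div_cancel_left c (Nat.pos_of_ne_zero hk0)]
            rintro rfl
            exact ha0 (by rw [hc, Nat.mul_zero])
        · intro m hm
          exact Nat.mul_div_cancel_left m (Nat.pos_of_ne_zero hk0)
        · intro b hb
          simp only [Finset.mem_filter] at hb
          exact Nat.mul_div_cancel' hb.2
        · intro m hm
          rw [Nat.div_div_eq_div_mul]
    _ = ∑ b ∈ Nat.divisors a, ∑ k ∈ Nat.divisors b,
          (μ (a / b) : ℤ) • (u b * V k) := by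
        rw [Finset.sum_comm' (s := Nat.divisors a) (t' := Nat.divisors a)
          (t := fun k => {d ∈ Nat.divisors a | k ∣ d})
          (s' := fun b => {d ∈ Nat.divisors a | d ∣ b}) (f := fun k b => (μ (a / b) : ℤ) • (u b * V k)) ?_]
        · refine Finset.sum_congr rfl fun b hb => ?_
          rw [Nat.divisors_filter_dvd_of_dvd ha0 (Nat.mem_divisors.mp hb).1]
        · intro k b
          simp only [Finset.mem_filter]
          tauto
    _ = ∑ b ∈ Nat.divisors a, (μ (a / b) : ℤ) • (u b * v b) := by
        refine Finset.sum_congr rfl fun b hb => ?_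
        rw [← Finset.smul_sum, ← Finset.mul_sum,
          key b (Nat.pos_of_mem_divisors hb)]
end

section
/- Let R be a commutative ℚ-algebra equipped with Adams operations: ring homomorphisms Ψ_n : R → R for n ≥ 1 with Ψ_1 = id and Ψ_i ∘ Ψ_j = Ψ_{ij} for all i, j ≥ 1. Fix B, X ∈ R. In the formal power series ring R⟦t⟧, equipped with the topology of coefficientwise convergence (product topology, R discrete), the family indexed by integers n ≥ 1 given by F_n := e_n(X) · G_n, where e_n(X) := (1/n) ∑_{m ∣ n} μ(n/m) Ψ_m(X) ∈ R and G_n := ∑_{k≥1} (1/k) Ψ_{nk}(B) t^{nk} ∈ R⟦t⟧, has sum (HasSum) equal to ∑_{s≥1} (1/s) Ψ_s(B·X) t^s. -/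
open scoped ArithmeticFunction ArithmeticFunction.Moebius

noncomputable instance powerSeriesCoeffwiseTopology (R : Type*) [CommRing R] :
    TopologicalSpace (PowerSeries R) :=
  TopologicalSpace.induced (fun f k => PowerSeries.coeff (R := R) k f)
    (@Pi.topologicalSpace ℕ (fun _ => R) fun _ => ⊥)

private lemma hasSum_of_coeff_eventually {R ι : Type*} [CommRing R]
    (f : ι → PowerSeries R) (a : PowerSeries R)
    (h : ∀ s : ℕ, ∀ᶠ F in Filter.atTop,
      ∑ i ∈ F, PowerSeries.coeff (R := R) s (f i) = PowerSeries.coeff (R := R) s a) :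
    HasSum f a := by
  letI : TopologicalSpace R := ⊥
  haveI : DiscreteTopology R := ⟨rfl⟩
  rw [HasSum]
  have key : (powerSeriesCoeffwiseTopology R) =
      TopologicalSpace.induced (fun f k => PowerSeries.coeff (R := R) k f) Pi.topologicalSpace := rfl
  rw [key, nhds_induced, Filter.tendsto_comap_iff]
  rw [tendsto_pi_nhds]
  intro s
  rw [nhds_discrete, Filter.tendsto_pure]
  filter_upwards [h s] with F hF
  simpa [map_sum] using hF

private lemma moebius_sum {R : Type*} [CommRing R]
    (Ψ : ℕ → R →+* R) (X : R) (s : ℕ) (hs : 0 < s) :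
    ∑ n ∈ Nat.divisors s, (∑ m ∈ Nat.divisors n, (μ (n / m) : ℤ) • Ψ m X) = Ψ s X := by
  have := (ArithmeticFunction.sum_eq_iff_sum_smul_moebius_eq
    (f := fun n => ∑ m ∈ Nat.divisors n, (μ (n / m) : ℤ) • Ψ m X)
    (g := fun n => Ψ n X)).mpr ?_ s hs
  · exact this
  · intro n hn
    rw [← Nat.sum_divisorsAntidiagonal' (f := fun a b => (μ a : ℤ) • Ψ b X)]

/-- **Logarithmic form of the product formula for `(1-t)^{-B·X}`.**
Let `R` be a commutative `ℚ`-algebra with Adams operations `Ψ_n` (ring homomorphisms,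
`Ψ_1 = id`, `Ψ_i ∘ Ψ_j = Ψ_{ij}`).  Then the family (indexed by `n ≥ 1`)
`F_n = e_n(X) • G_n`, where `e_n(X) = (1/n) ∑_{m ∣ n} μ(n/m) Ψ_m(X)` and
`G_n = ∑_{k≥1} (1/k) Ψ_{nk}(B) t^{nk}`, has sum `∑_{s≥1} (1/s) Ψ_s(B·X) t^s` in `R⟦t⟧`. -/
theorem hasSum_power_structure_log_form (R : Type*) [CommRing R] [Algebra ℚ R]
    (Ψ : ℕ → R →+* R)
    (hone : Ψ 1 = RingHom.id R)
    (hcomp : ∀ i, 1 ≤ i → ∀ j, 1 ≤ j → (Ψ i).comp (Ψ j) = Ψ (i * j))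
    (B X : R) :
    HasSum
      (fun n : {n : ℕ // 1 ≤ n} =>
        ((((n : ℕ) : ℚ))⁻¹ •
            ∑ m ∈ Nat.divisors (n : ℕ), (μ ((n : ℕ) / m) : ℤ) • Ψ m X : R) •
          (PowerSeries.mk fun s =>
            if s ≠ 0 ∧ (n : ℕ) ∣ s then ((((n : ℕ) : ℚ)) / (s : ℚ)) • Ψ s B else 0))
      (PowerSeries.mk fun s =>
        if s = 0 then 0 else ((s : ℚ))⁻¹ • Ψ s (B * X)) := by
  classical
  apply hasSum_of_coeff_eventually
  intro s
  -- coefficient of the summand at s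
  have hcoeff : ∀ n : {n : ℕ // 1 ≤ n},
      PowerSeries.coeff (R := R) s
        (((((n : ℕ) : ℚ))⁻¹ •
            ∑ m ∈ Nat.divisors (n : ℕ), (μ ((n : ℕ) / m) : ℤ) • Ψ m X : R) •
          (PowerSeries.mk fun s =>
            if s ≠ 0 ∧ (n : ℕ) ∣ s then ((((n : ℕ) : ℚ)) / (s : ℚ)) • Ψ s B else 0))
      = ((((n : ℕ) : ℚ))⁻¹ •
            ∑ m ∈ Nat.divisors (n : ℕ), (μ ((n : ℕ) / m) : ℤ) • Ψ m X : R) *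
          (if s ≠ 0 ∧ (n : ℕ) ∣ s then ((((n : ℕ) : ℚ)) / (s : ℚ)) • Ψ s B else 0) := by
    intro n
    rw [map_smul, PowerSeries.coeff_mk, smul_eq_mul]
  rcases Nat.eq_zero_or_pos s with hs | hs
  · subst hs
    apply Filter.Eventually.of_forall
    intro F
    rw [PowerSeries.coeff_mk, if_pos rfl]
    refine Finset.sum_eq_zero fun n _ => ?_
    rw [hcoeff, if_neg (by simp), mul_zero]
  · -- s > 0
    set e : {x // x ∈ Nat.divisors s} ↪ {n : ℕ // 1 ≤ n} :=
      ⟨fun d => ⟨d.1, Nat.pos_of_mem_divisors d.2⟩, by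
        intro a b hab
        simp only [Subtype.mk.injEq] at hab
        exact Subtype.ext hab⟩ with he
    set T : Finset {n : ℕ // 1 ≤ n} := (Nat.divisors s).attach.map e with hT
    rw [Filter.eventually_atTop]
    refine ⟨T, fun F hF => ?_⟩
    have hzero : ∀ n ∈ F, n ∉ T →
        PowerSeries.coeff (R := R) s
          (((((n : ℕ) : ℚ))⁻¹ •
              ∑ m ∈ Nat.divisors (n : ℕ), (μ ((n : ℕ) / m) : ℤ) • Ψ m X : R) •
            (PowerSeries.mk fun s =>
              if s ≠ 0 ∧ (n : ℕ) ∣ s then ((((n : ℕ) : ℚ)) / (s : ℚ)) • Ψ s B else 0)) = 0 := by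
      intro n _ hnT
      rw [hcoeff]
      have hndvd : ¬ (n : ℕ) ∣ s := by
        intro hdvd
        apply hnT
        rw [hT, Finset.mem_map]
        refine ⟨⟨(n : ℕ), Nat.mem_divisors.mpr ⟨hdvd, hs.ne'⟩⟩, Finset.mem_attach _ _, ?_⟩
        exact Subtype.ext rfl
      rw [if_neg (fun h => hndvd h.2), mul_zero]
    rw [← Finset.sum_subset hF hzero]
    -- now compute the sum over T
    rw [hT, Finset.sum_map]
    have hterm : ∀ d : {x // x ∈ Nat.divisors s},
        PowerSeries.coeff (R := R) s
          (((((e d : ℕ) : ℚ))⁻¹ •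
              ∑ m ∈ Nat.divisors ((e d : ℕ)), (μ (((e d : ℕ)) / m) : ℤ) • Ψ m X : R) •
            (PowerSeries.mk fun t =>
              if t ≠ 0 ∧ ((e d : ℕ)) ∣ t then ((((e d : ℕ)) : ℚ) / (t : ℚ)) • Ψ t B else 0))
        = ((s : ℚ))⁻¹ •
            ((∑ m ∈ Nat.divisors (d : ℕ), (μ ((d : ℕ) / m) : ℤ) • Ψ m X) * Ψ s B) := by
      intro d
      have hd : (e d : ℕ) = (d : ℕ) := rfl
      have hdvd : (d : ℕ) ∣ s := (Nat.mem_divisors.mp d.2).1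
      have hdne : ((d : ℕ) : ℚ) ≠ 0 := by
        exact_mod_cast (Nat.pos_of_mem_divisors d.2).ne'
      rw [hcoeff, hd, if_pos ⟨hs.ne', hdvd⟩]
      rw [smul_mul_assoc, mul_smul_comm, smul_smul]
      congr 1
      field_simp
    rw [Finset.sum_congr rfl (fun d _ => hterm d)]
    rw [Finset.sum_attach (Nat.divisors s)
      (fun d => ((s : ℚ))⁻¹ • ((∑ m ∈ Nat.divisors d, (μ (d / m) : ℤ) • Ψ m X) * Ψ s B))]
    rw [← Finset.smul_sum, ← Finset.sum_mul, moebius_sum Ψ X s hs]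
    rw [PowerSeries.coeff_mk, if_neg hs.ne', map_mul, mul_comm]
end

section
/- In the formal power series ring ℚ⟦t⟧, equipped with the topology of coefficientwise convergence (product topology, ℚ discrete), the family indexed by integers n ≥ 1 given by (μ(n)/n) • L_n, where L_n ∈ ℚ⟦t⟧ is the series whose coefficient of t^m equals n/m if n divides m and m ≥ 1, and 0 otherwise (i.e. L_n = ∑_{k≥1} t^{nk}/k), has sum (HasSum) equal to the series t. -/
open scoped ArithmeticFunction
open scoped ArithmeticFunction.Moebius

open Filter Finset

/-- The topology of coefficientwise convergence on `ℚ⟦t⟧`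
(the product topology, `ℚ` being discrete). -/
noncomputable instance : TopologicalSpace (PowerSeries ℚ) :=
  TopologicalSpace.induced (fun f k => PowerSeries.coeff (R := ℚ) k f)
    (@Pi.topologicalSpace ℕ (fun _ => ℚ) fun _ => ⊥)

private lemma sum_moebius_divisors (m : ℕ) :
    ∑ d ∈ m.divisors, ((μ d : ℤ) : ℚ) = if m = 1 then 1 else 0 := by
  have h := congrArg (fun f : ArithmeticFunction ℚ => f m)
    (ArithmeticFunction.coe_moebius_mul_coe_zeta (R := ℚ))
  simp only [ArithmeticFunction.coe_mul_zeta_apply, ArithmeticFunction.one_apply,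
    ArithmeticFunction.intCoe_apply] at h
  exact h

private lemma tendsto_induced_of_eventually {A β ι X : Type*}
    (t : TopologicalSpace X) (ht : t = ⊥)
    (φ : β → ι → X) {l : Filter A} {f : A → β} {b : β}
    (h : ∀ i, ∀ᶠ s in l, φ (f s) i = φ b i) :
    @Filter.Tendsto A β f l
      (@nhds β (TopologicalSpace.induced φ (@Pi.topologicalSpace ι (fun _ => X) fun _ => t)) b) := by
  letI : TopologicalSpace X := t
  haveI : DiscreteTopology X := ⟨ht⟩
  letI : TopologicalSpace β := TopologicalSpace.induced φ Pi.topologicalSpace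
  rw [nhds_induced, Filter.tendsto_comap_iff, tendsto_pi_nhds]
  intro i
  rw [nhds_discrete, Filter.tendsto_pure]
  exact h i

/-- **Logarithmic form of `e^t = ∏_{n≥1} (1-t^n)^{-μ(n)/n}`.**
The family `n ↦ (μ(n)/n) • L_n` (`n ≥ 1`), where `L_n = ∑_{k≥1} t^{nk}/k` is the series
whose coefficient of `t^m` is `n/m` if `n ∣ m`, `m ≥ 1`, and `0` otherwise, has sum `t`
in `ℚ⟦t⟧`. -/
theorem hasSum_moebius_div_smul_log : 
    HasSum
      (fun n : {n : ℕ // 1 ≤ n} =>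
        ((μ (n : ℕ) : ℚ) / ((n : ℕ) : ℚ)) •
          (PowerSeries.mk fun m =>
            if m ≠ 0 ∧ (n : ℕ) ∣ m then (((n : ℕ) : ℚ)) / (m : ℚ) else 0))
      (PowerSeries.X : PowerSeries ℚ) := by
  set F : {n : ℕ // 1 ≤ n} → PowerSeries ℚ := fun n =>
    ((μ (n : ℕ) : ℚ) / ((n : ℕ) : ℚ)) •
      (PowerSeries.mk fun m =>
        if m ≠ 0 ∧ (n : ℕ) ∣ m then (((n : ℕ) : ℚ)) / (m : ℚ) else 0) with hF
  rw [HasSum]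
  refine tendsto_induced_of_eventually ⊥ rfl (fun f k => PowerSeries.coeff (R := ℚ) k f) ?_
  intro k
  -- the finite set of potentially nonzero indices
  set T : Finset {n : ℕ // 1 ≤ n} := k.divisors.subtype (fun n => 1 ≤ n) with hT
  have hcoeff : ∀ n : {n : ℕ // 1 ≤ n},
      PowerSeries.coeff (R := ℚ) k (F n) =
        ((μ (n : ℕ) : ℚ) / ((n : ℕ) : ℚ)) *
          (if k ≠ 0 ∧ (n : ℕ) ∣ k then (((n : ℕ) : ℚ)) / (k : ℚ) else 0) := by
    intro n
    simp [hF, PowerSeries.coeff_mk, smul_eq_mul]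
  have hzero : ∀ n : {n : ℕ // 1 ≤ n}, n ∉ T → PowerSeries.coeff (R := ℚ) k (F n) = 0 := by
    intro n hn
    rw [hcoeff]
    rw [hT, Finset.mem_subtype] at hn
    have : ¬ (k ≠ 0 ∧ (n : ℕ) ∣ k) := by
      intro ⟨hk, hd⟩
      exact hn (Nat.mem_divisors.mpr ⟨hd, hk⟩)
    rw [if_neg this, mul_zero]
  have hTsum : ∑ n ∈ T, PowerSeries.coeff (R := ℚ) k (F n) = PowerSeries.coeff (R := ℚ) k PowerSeries.X := by
    rw [PowerSeries.coeff_X]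
    calc ∑ n ∈ T, PowerSeries.coeff (R := ℚ) k (F n)
        = ∑ d ∈ k.divisors.filter (fun n => 1 ≤ n), ((μ d : ℤ) : ℚ) / (k : ℚ) := by
          rw [hT, ← Finset.sum_subtype_eq_sum_filter]
          refine Finset.sum_congr rfl ?_
          intro n hn
          rw [Finset.mem_subtype, Nat.mem_divisors] at hn
          rw [hcoeff, if_pos ⟨hn.2, hn.1⟩]
          have hn0 : ((n : ℕ) : ℚ) ≠ 0 :=
            Nat.cast_ne_zero.mpr (by have := n.2; omega)
          field_simp
      _ = (∑ d ∈ k.divisors, ((μ d : ℤ) : ℚ)) / (k : ℚ) := by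
          rw [Finset.sum_div]
          congr 1
          refine Finset.filter_true_of_mem ?_
          intro d hd
          exact Nat.pos_of_mem_divisors hd
      _ = (if k = 1 then 1 else 0) := by
          rw [sum_moebius_divisors]
          by_cases hk : k = 1 <;> simp [hk]
  refine Filter.eventually_atTop.mpr ⟨T, fun s hs => ?_⟩
  have : PowerSeries.coeff (R := ℚ) k (∑ n ∈ s, F n) = ∑ n ∈ s, PowerSeries.coeff (R := ℚ) k (F n) :=
    map_sum _ _ _
  calc (fun f k => PowerSeries.coeff (R := ℚ) k f) (∑ n ∈ s, F n) k
      = ∑ n ∈ s, PowerSeries.coeff (R := ℚ) k (F n) := this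
    _ = ∑ n ∈ T, PowerSeries.coeff (R := ℚ) k (F n) :=
        (Finset.sum_subset hs (fun n _ hn => hzero n hn)).symm
    _ = PowerSeries.coeff (R := ℚ) k PowerSeries.X := hTsum
end

section
/- In the ring of formal power series in two variables x, y over ℚ (MvPowerSeries on a two-element index type), equipped with the topology of coefficientwise convergence, the family indexed by pairs (k,m) of positive integers with gcd(k,m) = 1, given by (1/k) • M_{k,m}, where M_{k,m} := ∑_{j≥1} (1/j) x^{jk} y^{jm}, has sum (HasSum) equal to the series ∑_{a≥1, b≥1} (1/a) x^a y^b. -/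
/-- The formal power series in two variables `x, y` over `ℚ` with the given
coefficient function (`MvPowerSeries (Fin 2) ℚ` is by definition the type of
functions `(Fin 2 →₀ ℕ) → ℚ`; the variable `x` has index `0`, `y` has index `1`). -/
noncomputable def mvMk (f : (Fin 2 →₀ ℕ) → ℚ) : MvPowerSeries (Fin 2) ℚ := f

/-- The topology of coefficientwise convergence on `ℚ⟦x,y⟧`
(the product topology, `ℚ` being discrete). -/
noncomputable instance : TopologicalSpace (MvPowerSeries (Fin 2) ℚ) :=
  TopologicalSpace.induced (fun f d => MvPowerSeries.coeff (R := ℚ) d f)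
    (@Pi.topologicalSpace (Fin 2 →₀ ℕ) (fun _ => ℚ) fun _ => ⊥)

/-- **Logarithmic form of `∏_{gcd(k,m)=1} (1-x^k y^m)^{1/k} = (1-x)^{y/(1-y)}`.**
The family indexed by coprime pairs `(k,m)` of positive integers, given by
`(1/k) • M_{k,m}` where `M_{k,m} = ∑_{j≥1} (1/j) x^{jk} y^{jm}` (so the coefficient of
`x^a y^b` in `M_{k,m}` is `k/a` when `(a,b) = (jk,jm)` for some `j ≥ 1`, and `0`
otherwise), has sum `∑_{a≥1,b≥1} (1/a) x^a y^b` in `ℚ⟦x,y⟧`. -/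
theorem hasSum_coprime_pairs_log_form :
    HasSum
      (fun p : {p : ℕ × ℕ // 1 ≤ p.1 ∧ 1 ≤ p.2 ∧ Nat.gcd p.1 p.2 = 1} =>
        (((p.1.1 : ℚ))⁻¹) •
          mvMk fun d =>
            if d 0 ≠ 0 ∧ p.1.1 ∣ d 0 ∧ d 1 * p.1.1 = d 0 * p.1.2
            then (p.1.1 : ℚ) / (d 0 : ℚ) else 0)
      (mvMk fun d => if d 0 ≠ 0 ∧ d 1 ≠ 0 then ((d 0 : ℕ) : ℚ)⁻¹ else 0) := by
  letI : TopologicalSpace ℚ := ⊥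
  have transfer : ∀ {ι M : Type} [AddCommMonoid M] (t₁ t₂ : TopologicalSpace M)
      (F : ι → M) (S : M), t₁ = t₂ → @HasSum M ι _ t₂ F S (SummationFilter.unconditional ι) → @HasSum M ι _ t₁ F S (SummationFilter.unconditional ι) := by
    rintro ι M _ t₁ t₂ F S rfl h; exact h
  refine transfer _ (@Pi.topologicalSpace (Fin 2 →₀ ℕ) (fun _ => ℚ) fun _ => ⊥) _ _
    (@induced_id _ (@Pi.topologicalSpace (Fin 2 →₀ ℕ) (fun _ => ℚ) fun _ => ⊥))
    (Pi.hasSum.mpr ?_)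
  intro d
  show HasSum
      (fun p : {p : ℕ × ℕ // 1 ≤ p.1 ∧ 1 ≤ p.2 ∧ Nat.gcd p.1 p.2 = 1} =>
        (((p.1.1 : ℚ))⁻¹) *
          (if d 0 ≠ 0 ∧ p.1.1 ∣ d 0 ∧ d 1 * p.1.1 = d 0 * p.1.2
            then (p.1.1 : ℚ) / (d 0 : ℚ) else 0))
      (if d 0 ≠ 0 ∧ d 1 ≠ 0 then ((d 0 : ℕ) : ℚ)⁻¹ else 0)
  by_cases ha : d 0 = 0
  · rw [if_neg (by simp [ha])]
    convert hasSum_zero with p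
    rw [if_neg (by simp [ha]), mul_zero]
  by_cases hb : d 1 = 0
  · rw [if_neg (by simp [hb])]
    convert hasSum_zero with p
    obtain ⟨⟨k, m⟩, hk, hm, hcop⟩ := p
    dsimp only
    rw [if_neg, mul_zero]
    rintro ⟨-, -, heq⟩
    rw [hb, zero_mul] at heq
    exact (Nat.mul_ne_zero ha (by omega)) heq.symm
  · set a := d 0 with hA
    set b := d 1 with hB
    set g := Nat.gcd a b with hg
    have hgpos : 0 < g := Nat.gcd_pos_of_pos_left b (Nat.pos_of_ne_zero ha)
    have hk1 : 1 ≤ a / g :=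
      Nat.div_pos (Nat.le_of_dvd (Nat.pos_of_ne_zero ha) (Nat.gcd_dvd_left a b)) hgpos
    have hm1 : 1 ≤ b / g :=
      Nat.div_pos (Nat.le_of_dvd (Nat.pos_of_ne_zero hb) (Nat.gcd_dvd_right a b)) hgpos
    set p₀ : {p : ℕ × ℕ // 1 ≤ p.1 ∧ 1 ≤ p.2 ∧ Nat.gcd p.1 p.2 = 1} :=
      ⟨(a / g, b / g), hk1, hm1, Nat.coprime_div_gcd_div_gcd hgpos⟩ with hp₀
    have huniq : ∀ p : {p : ℕ × ℕ // 1 ≤ p.1 ∧ 1 ≤ p.2 ∧ Nat.gcd p.1 p.2 = 1}, p ≠ p₀ →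
        ((((p.1.1 : ℚ))⁻¹) *
          (if a ≠ 0 ∧ p.1.1 ∣ a ∧ b * p.1.1 = a * p.1.2
            then (p.1.1 : ℚ) / (a : ℚ) else 0)) = 0 := by
      rintro ⟨⟨k, m⟩, hk, hm, hcop⟩ hne
      dsimp only
      rw [if_neg, mul_zero]
      rintro ⟨-, hdvd, heq⟩
      obtain ⟨j, hj⟩ := hdvd
      dsimp only at heq hj hk hm hcop
      have hkpos : 0 < k := hk
      have hbj : b = j * m :=
        Nat.eq_of_mul_eq_mul_left hkpos (by rw [mul_comm k b, heq, hj]; ring)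
      have hjpos : 0 < j := by
        rcases Nat.eq_zero_or_pos j with h | h
        · exact absurd (by rw [hj, h, mul_zero]) ha
        · exact h
      have hgj : g = j := by
        rw [hg, hj, hbj, mul_comm k j, Nat.gcd_mul_left, hcop, mul_one]
      apply hne
      apply Subtype.ext
      have hak : a / g = k := by rw [hgj, hj, Nat.mul_div_cancel _ hjpos]
      have hbm : b / g = m := by rw [hgj, hbj, Nat.mul_div_cancel_left _ hjpos]
      simp [hp₀, hak, hbm]
    have key := hasSum_single
      (f := fun p : {p : ℕ × ℕ // 1 ≤ p.1 ∧ 1 ≤ p.2 ∧ Nat.gcd p.1 p.2 = 1} =>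
        (((p.1.1 : ℚ))⁻¹) *
          (if a ≠ 0 ∧ p.1.1 ∣ a ∧ b * p.1.1 = a * p.1.2
            then (p.1.1 : ℚ) / (a : ℚ) else 0)) p₀ huniq
    have hcond : a ≠ 0 ∧ (a / g) ∣ a ∧ b * (a / g) = a * (b / g) := by
      refine ⟨ha, Nat.div_dvd_of_dvd (Nat.gcd_dvd_left a b), ?_⟩
      have h1 : b * (a / g) = b * a / g := (Nat.mul_div_assoc b (Nat.gcd_dvd_left a b)).symm
      have h2 : a * (b / g) = a * b / g := (Nat.mul_div_assoc a (Nat.gcd_dvd_right a b)).symm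
      rw [h1, h2, Nat.mul_comm b a]
    rw [if_pos ⟨ha, hb⟩]
    convert key using 1
    have hkne : ((a / g : ℕ) : ℚ) ≠ 0 := Nat.cast_ne_zero.mpr (by omega)
    show ((a : ℕ) : ℚ)⁻¹ = _
    show ((a : ℕ) : ℚ)⁻¹ = ((a / g : ℕ) : ℚ)⁻¹ * (if a ≠ 0 ∧ (a / g) ∣ a ∧ b * (a / g) = a * (b / g) then ((a / g : ℕ) : ℚ) / (a : ℚ) else 0)
    rw [if_pos hcond, div_eq_mul_inv, ← mul_assoc, inv_mul_cancel₀ hkne, one_mul]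
end

section
/- Let R be a commutative ring and let (Ψ_d)_{d≥1} be Adams operations on R: each Ψ_d is a ring homomorphism, Ψ_1 = id, and Ψ_i ∘ Ψ_j = Ψ_{ij}. Let a ∈ R and suppose B : ℕ → R satisfies, for every n ≥ 1, ∑_{(k,m): km=n} Ψ_m(k·B_k) = −(−a)^n. Then for every n ≥ 1, n·B_n = −∑_{d ∣ n} μ(d)·Ψ_d((−a)^{n/d}) = −∑_{d ∣ n} μ(d)·(−Ψ_d(a))^{n/d}. -/
open scoped ArithmeticFunction ArithmeticFunction.Moebius

/-- **The exponents in the decomposition of `1 + a t` as `∏ (1 - t^k)^{-B_k}`.**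
If the Adams operations `Ψ_d` are ring homomorphisms with `Ψ_1 = id` and
`Ψ_i ∘ Ψ_j = Ψ_{ij}`, and `B` satisfies `∑_{km = n} Ψ_m (k • B_k) = -(-a)^n` for all
`n ≥ 1`, then `n • B_n = -∑_{d ∣ n} μ(d) • Ψ_d ((-a)^{n/d}) = -∑_{d ∣ n} μ(d) • (-Ψ_d a)^{n/d}`. -/
theorem adams_inversion_one_add_at (R : Type*) [CommRing R] (Ψ : ℕ → R →+* R)
    (hone : Ψ 1 = RingHom.id R)
    (hcomp : ∀ i, 1 ≤ i → ∀ j, 1 ≤ j → (Ψ i).comp (Ψ j) = Ψ (i * j))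
    (a : R) (B : ℕ → R)
    (hB : ∀ n : ℕ, 1 ≤ n →
      ∑ p ∈ Nat.divisorsAntidiagonal n, Ψ p.2 ((p.1 : ℤ) • B p.1) = -(-a) ^ n) :
    ∀ n : ℕ, 1 ≤ n →
      (n : ℤ) • B n = -∑ d ∈ Nat.divisors n, (μ d : ℤ) • Ψ d ((-a) ^ (n / d)) ∧
      (-∑ d ∈ Nat.divisors n, (μ d : ℤ) • Ψ d ((-a) ^ (n / d))
        = -∑ d ∈ Nat.divisors n, (μ d : ℤ) • (-(Ψ d a)) ^ (n / d)) := by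
  intro n hn
  have hn0 : n ≠ 0 := by omega
  constructor
  · -- Möbius inversion on the divisor-closed set of divisors of `n`.
    set f : ℕ → R := fun k => Ψ (n / k) ((k : ℤ) • B k) with hf
    set g : ℕ → R := fun q => Ψ (n / q) (-(-a) ^ q) with hg
    have key : ∀ q > 0, q ∈ {m | m ∣ n} →
        (∑ i ∈ q.divisors, f i) = g q := by
      intro q hq hqn
      have hq1 : 1 ≤ q := hq
      rw [hg]
      simp only
      rw [← hB q hq1, map_sum,
        Nat.sum_divisorsAntidiagonal (fun k m => Ψ (n / q) (Ψ m ((k : ℤ) • B k)))]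
      refine Finset.sum_congr rfl fun i hi => ?_
      obtain ⟨hdvd, hq0⟩ := Nat.mem_divisors.mp hi
      have hi1 : 1 ≤ i := Nat.pos_of_dvd_of_pos hdvd hq
      have hqi : 1 ≤ q / i := Nat.one_le_div_iff hi1 |>.mpr (Nat.le_of_dvd hq hdvd)
      have hnq : 1 ≤ n / q := Nat.one_le_div_iff hq |>.mpr (Nat.le_of_dvd (by omega) hqn)
      have hcomp' := hcomp (n / q) hnq (q / i) hqi
      have h1 : Ψ (n / q) (Ψ (q / i) ((i : ℤ) • B i))
          = Ψ (n / q * (q / i)) ((i : ℤ) • B i) := by rw [← hcomp']; rfl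
      rw [hf, h1]
      -- n / i = (n / q) * (q / i)
      obtain ⟨c, hc⟩ := hqn
      obtain ⟨e, he⟩ := hdvd
      subst hc he
      have h2 : i * e * c / (i * e) = c := Nat.mul_div_cancel_left _ hq
      have h3 : i * e / i = e := Nat.mul_div_cancel_left _ hi1
      have h4 : i * e * c / i = e * c := by
        rw [Nat.mul_assoc, Nat.mul_div_cancel_left _ hi1]
      simp only []
      rw [h4, h2, h3, Nat.mul_comm e c]
    have inv := (ArithmeticFunction.sum_eq_iff_sum_smul_moebius_eq_on {m | m ∣ n}
      (fun m k hmk hk => hmk.trans hk)).mp key n hn (dvd_refl n)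
    have hfn : f n = (n : ℤ) • B n := by
      rw [hf]; simp only [Nat.div_self (by omega : 0 < n), hone]; rfl
    rw [← hfn, ← inv,
      Nat.sum_divisorsAntidiagonal (fun d q => (μ d : ℤ) • g q),
      ← Finset.sum_neg_distrib]
    refine Finset.sum_congr rfl fun d hd => ?_
    obtain ⟨hdvd, _⟩ := Nat.mem_divisors.mp hd
    rw [hg]
    simp only [Nat.div_div_self hdvd hn0, map_neg, smul_neg]
  · congr 1
    refine Finset.sum_congr rfl fun d hd => ?_
    rw [map_pow, map_neg]
end
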